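/- (Lower sieve) Let l be a lace-map on the subsets of a finite set P, let X be a finite set, let A : X → (subsets of P), and let wt : X → ℝ be a nonnegative weight function. Suppose every unsaturated lace of l (i.e., every lace L with C(L) ≠ ∅) has even cardinality. Then N₀(X) = Σ_{x ∈ X, A(x) = ∅} wt(x) satisfies N₀(X) ≥ Σ_{L saturated lace} (−1)^{|L|} N(L), where the sum is over laces L with C(L) = ∅ and N(L) = Σ_{x ∈ X, L ⊆ A(x)} wt(x) is the total weight of elements having all the properties in L. -/

import Mathlib

/-- The set `C(L)` of properties compatible with a lace `L`. -/
def laceC {α : Type*} [DecidableEq α] [Fintype α]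
    (l : Finset α → Finset α) (L : Finset α) : Finset α :=
  (Finset.univ \ L).filter (fun p => l (insert p L) = L)

section Aux

variable {α : Type*} [DecidableEq α]

lemma alt_sum_powerset (S : Finset α) :
    ∑ G ∈ S.powerset, (-1 : ℝ) ^ G.card = if S = ∅ then 1 else 0 := by
  have h := Finset.sum_powerset_neg_one_pow_card (x := S)
  calc ∑ G ∈ S.powerset, (-1 : ℝ) ^ G.card
      = ((∑ G ∈ S.powerset, (-1 : ℤ) ^ G.card : ℤ) : ℝ) := by push_cast; rfl
    _ = ((if S = ∅ then 1 else 0 : ℤ) : ℝ) := by rw [h]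
    _ = if S = ∅ then 1 else 0 := by split <;> simp

lemma lace_union (l : Finset α → Finset α)
    (h3 : ∀ S₁ S₂ : Finset α, l S₁ = l S₂ → l (S₁ ∪ S₂) = l S₁)
    {L : Finset α} (hL : l L = L) :
    ∀ T : Finset α, (∀ p ∈ T, l (insert p L) = L) → l (L ∪ T) = L := by
  intro T
  refine Finset.induction_on T (by simpa using hL) ?_
  intro p T _ ih h
  have hU : L ∪ insert p T = (insert p L) ∪ (L ∪ T) := by
    ext q
    simp only [Finset.mem_insert, Finset.mem_union]
    tauto
  have h1' : l (insert p L) = L := h p (Finset.mem_insert_self p T)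
  have h2' : l (L ∪ T) = L := ih (fun q hq => h q (Finset.mem_insert_of_mem hq))
  rw [hU, h3 _ _ (h1'.trans h2'.symm), h1']

/-- The key identity: the alternating sum over laces `L ⊆ S` with no compatible
element inside `S` equals the indicator of `S = ∅`. -/
lemma lace_key (l : Finset α → Finset α)
    (h1 : ∀ S : Finset α, l S ⊆ S)
    (h2 : ∀ S G : Finset α, l S ⊆ G → G ⊆ S → l G = l S)
    (h3 : ∀ S₁ S₂ : Finset α, l S₁ = l S₂ → l (S₁ ∪ S₂) = l S₁)
    (S : Finset α) :
    ∑ L ∈ S.powerset.filter (fun L => l L = L ∧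
        (S \ L).filter (fun p => l (insert p L) = L) = ∅), (-1 : ℝ) ^ L.card
      = if S = ∅ then 1 else 0 := by
  classical
  have maps : ∀ G ∈ S.powerset, l G ∈ S.powerset.filter (fun L => l L = L) := by
    intro G hG
    simp only [Finset.mem_powerset] at hG
    refine Finset.mem_filter.mpr ⟨Finset.mem_powerset.mpr ((h1 G).trans hG), ?_⟩
    exact h2 G (l G) (subset_refl _) (h1 G)
  have fib := Finset.sum_fiberwise_of_maps_to maps (fun G => (-1 : ℝ) ^ G.card)
  -- compute each fiber
  have fiber : ∀ L ∈ S.powerset.filter (fun L => l L = L),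
      ∑ G ∈ S.powerset.filter (fun G => l G = L), (-1 : ℝ) ^ G.card
        = if (S \ L).filter (fun p => l (insert p L) = L) = ∅
            then (-1 : ℝ) ^ L.card else 0 := by
    intro L hL
    simp only [Finset.mem_filter, Finset.mem_powerset] at hL
    obtain ⟨hLS, hlace⟩ := hL
    set C : Finset α := (S \ L).filter (fun p => l (insert p L) = L) with hC
    have hCL : ∀ p ∈ C, p ∉ L := by
      intro p hp
      simp only [hC, Finset.mem_filter, Finset.mem_sdiff] at hp
      exact hp.1.2
    have himg : S.powerset.filter (fun G => l G = L)
        = C.powerset.image (fun T => L ∪ T) := by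
      ext G
      simp only [Finset.mem_filter, Finset.mem_powerset, Finset.mem_image]
      constructor
      · rintro ⟨hGS, hlG⟩
        refine ⟨G \ L, ?_, ?_⟩
        · intro p hp
          simp only [Finset.mem_sdiff] at hp
          have hins : l (insert p L) = l G := h2 G (insert p L)
            (by rw [hlG]; exact Finset.subset_insert _ _)
            (Finset.insert_subset hp.1 (hlG ▸ h1 G))
          simp only [hC, Finset.mem_filter, Finset.mem_sdiff]
          exact ⟨⟨hGS hp.1, hp.2⟩, hins.trans hlG⟩
        · exact Finset.union_sdiff_of_subset (hlG ▸ h1 G)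
      · rintro ⟨T, hT, rfl⟩
        constructor
        · apply Finset.union_subset hLS
          intro p hp
          have hm := hT hp
          simp only [hC, Finset.mem_filter, Finset.mem_sdiff] at hm
          exact hm.1.1
        · exact lace_union l h3 hlace T (fun p hp => by
            have hm := hT hp
            simp only [hC, Finset.mem_filter] at hm
            exact hm.2)
    have edisj : ∀ T : Finset α, T ⊆ C → Disjoint L T :=
      fun T hT => Finset.disjoint_left.mpr (fun p hp hp' => hCL p (hT hp') hp)
    rw [himg, Finset.sum_image ?inj]
    case inj =>
      intro T₁ h₁ T₂ h₂ hEq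
      simp only [Finset.mem_coe, Finset.mem_powerset] at h₁ h₂
      have e : ∀ T : Finset α, T ⊆ C → (L ∪ T) \ L = T := by
        intro T hT
        rw [Finset.union_sdiff_left]
        exact Finset.sdiff_eq_self_of_disjoint (edisj T hT).symm
      rw [← e T₁ h₁, ← e T₂ h₂, show L ∪ T₁ = L ∪ T₂ from hEq]
    calc ∑ T ∈ C.powerset, (-1 : ℝ) ^ (L ∪ T).card
        = ∑ T ∈ C.powerset, (-1 : ℝ) ^ L.card * (-1 : ℝ) ^ T.card := by
          apply Finset.sum_congr rfl
          intro T hT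
          rw [Finset.card_union_of_disjoint
            (edisj T (Finset.mem_powerset.mp hT)), pow_add]
      _ = (-1 : ℝ) ^ L.card * ∑ T ∈ C.powerset, (-1 : ℝ) ^ T.card := by
          rw [Finset.mul_sum]
      _ = (-1 : ℝ) ^ L.card * (if C = ∅ then 1 else 0) := by
          rw [alt_sum_powerset]
      _ = if C = ∅ then (-1 : ℝ) ^ L.card else 0 := by
          split <;> simp
  rw [← alt_sum_powerset S, ← fib, Finset.sum_congr rfl fiber,
    Finset.sum_ite, Finset.sum_const_zero, add_zero, Finset.filter_filter]

end Aux

/-- Lower sieve: if every unsaturated lace has even cardinality and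
the weights are nonnegative, then
`N₀(X) ≥ Σ_{L saturated lace} (−1)^{|L|} N(L)`. -/
theorem lace_lower_sieve {α : Type*} [DecidableEq α] [Fintype α]
    (l : Finset α → Finset α)
    (h1 : ∀ S : Finset α, l S ⊆ S)
    (h2 : ∀ S G : Finset α, l S ⊆ G → G ⊆ S → l G = l S)
    (h3 : ∀ S₁ S₂ : Finset α, l S₁ = l S₂ → l (S₁ ∪ S₂) = l S₁)
    (X : Type*) [Fintype X] (A : X → Finset α) (wt : X → ℝ)
    (hwt : ∀ x, 0 ≤ wt x)
    (heven : ∀ L : Finset α, l L = L → laceC l L ≠ ∅ → Even L.card) :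
    ∑ x ∈ Finset.univ.filter (fun x : X => A x = ∅), wt x ≥
      ∑ L ∈ Finset.univ.filter (fun L : Finset α => l L = L ∧ laceC l L = ∅),
        (-1 : ℝ) ^ L.card *
          ∑ x ∈ Finset.univ.filter (fun x : X => L ⊆ A x), wt x := by
  classical
  -- pointwise bound
  have pointwise : ∀ S : Finset α,
      ∑ L ∈ Finset.univ.filter
          (fun L : Finset α => (l L = L ∧ laceC l L = ∅) ∧ L ⊆ S),
        (-1 : ℝ) ^ L.card ≤ (if S = ∅ then (1 : ℝ) else 0) := by
    intro S
    set B : Finset (Finset α) := S.powerset.filter (fun L => l L = L ∧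
        (S \ L).filter (fun p => l (insert p L) = L) = ∅) with hB
    have hsub : Finset.univ.filter
        (fun L : Finset α => (l L = L ∧ laceC l L = ∅) ∧ L ⊆ S) ⊆ B := by
      intro L hL
      simp only [Finset.mem_filter, Finset.mem_univ, true_and] at hL
      obtain ⟨⟨hlace, hsat⟩, hLS⟩ := hL
      refine Finset.mem_filter.mpr ⟨Finset.mem_powerset.mpr hLS, hlace, ?_⟩
      have hss : (S \ L).filter (fun p => l (insert p L) = L) ⊆ laceC l L := by
        intro p hp
        simp only [Finset.mem_filter, Finset.mem_sdiff] at hp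
        simp only [laceC, Finset.mem_filter, Finset.mem_sdiff, Finset.mem_univ,
          true_and]
        exact ⟨hp.1.2, hp.2⟩
      rw [← Finset.subset_empty]
      exact hsat ▸ hss
    have hmono : ∑ L ∈ Finset.univ.filter
          (fun L : Finset α => (l L = L ∧ laceC l L = ∅) ∧ L ⊆ S),
        (-1 : ℝ) ^ L.card ≤ ∑ L ∈ B, (-1 : ℝ) ^ L.card := by
      apply Finset.sum_le_sum_of_subset_of_nonneg hsub
      intro L hLB hLA
      simp only [hB, Finset.mem_filter, Finset.mem_powerset] at hLB
      obtain ⟨hLS, hlace, hCS⟩ := hLB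
      simp only [Finset.mem_filter, Finset.mem_univ, true_and, not_and] at hLA
      have hsat : laceC l L ≠ ∅ := by
        intro h
        exact (hLA ⟨hlace, h⟩) hLS
      rw [Even.neg_one_pow (heven L hlace hsat)]
      norm_num
    calc _ ≤ ∑ L ∈ B, (-1 : ℝ) ^ L.card := hmono
      _ = if S = ∅ then 1 else 0 := lace_key l h1 h2 h3 S
  -- swap the double sum
  have swap : ∑ L ∈ Finset.univ.filter (fun L : Finset α => l L = L ∧ laceC l L = ∅),
        (-1 : ℝ) ^ L.card *
          ∑ x ∈ Finset.univ.filter (fun x : X => L ⊆ A x), wt x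
      = ∑ x : X, (∑ L ∈ Finset.univ.filter
          (fun L : Finset α => (l L = L ∧ laceC l L = ∅) ∧ L ⊆ A x),
            (-1 : ℝ) ^ L.card) * wt x := by
    simp_rw [Finset.mul_sum, Finset.sum_mul]
    rw [Finset.sum_sigma', Finset.sum_sigma']
    apply Finset.sum_nbij' (fun p => ⟨p.2, p.1⟩) (fun p => ⟨p.2, p.1⟩)
    · rintro ⟨L, x⟩ hp
      simp only [Finset.mem_sigma, Finset.mem_filter, Finset.mem_univ,
        true_and] at hp ⊢
      tauto
    · rintro ⟨x, L⟩ hp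
      simp only [Finset.mem_sigma, Finset.mem_filter, Finset.mem_univ,
        true_and] at hp ⊢
      tauto
    · rintro ⟨L, x⟩ _; rfl
    · rintro ⟨x, L⟩ _; rfl
    · rintro ⟨L, x⟩ _; rfl
  rw [ge_iff_le, swap]
  calc ∑ x : X, (∑ L ∈ Finset.univ.filter
          (fun L : Finset α => (l L = L ∧ laceC l L = ∅) ∧ L ⊆ A x),
            (-1 : ℝ) ^ L.card) * wt x
      ≤ ∑ x : X, (if A x = ∅ then (1 : ℝ) else 0) * wt x := by
        apply Finset.sum_le_sum
        intro x _
        exact mul_le_mul_of_nonneg_right (pointwise (A x)) (hwt x)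
    _ = ∑ x ∈ Finset.univ.filter (fun x : X => A x = ∅), wt x := by
        rw [Finset.sum_filter]
        apply Finset.sum_congr rfl
        intro x _
        split <;> simp
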